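/- For h, ℓ in ℤ^d \ {0} with d ≥ 3, the norm of the bilinear map P_{hℓ} : h^⊥ × ℓ^⊥ → (h+ℓ)^⊥ defined by P_{hℓ}(a,b) := ((a · ℓ)/|ℓ|) · Π_{h+ℓ}(b) equals sin θ_{hℓ}, where θ_{hℓ} ∈ [0,π] is the angle between h and ℓ. -/

import Mathlib

open scoped BigOperators
noncomputable section

/-- The lattice point `h ∈ ℤ^d` viewed as a vector of `ℝ^d`. -/
def rvec {d : ℕ} (h : Fin d → ℤ) : EuclideanSpace ℝ (Fin d) :=
  (WithLp.equiv 2 (Fin d → ℝ)).symm (fun i => (h i : ℝ))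

/-- The lattice point `h ∈ ℤ^d` viewed as a vector of `ℂ^d`. -/
def cvec {d : ℕ} (h : Fin d → ℤ) : EuclideanSpace ℂ (Fin d) :=
  (WithLp.equiv 2 (Fin d → ℂ)).symm (fun i => (h i : ℂ))

/-- The bilinear map `P_{hℓ}(a,b) = ((a·ℓ)/|ℓ|) Π_{h+ℓ} b`, where `Π_k` is the (Hermitian)
orthogonal projection of `ℂ^d` onto `k^⊥`. -/
def Phl {d : ℕ} (h ℓ : Fin d → ℤ) (a b : EuclideanSpace ℂ (Fin d)) :
    EuclideanSpace ℂ (Fin d) :=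
  ((∑ i, a i * (ℓ i : ℂ)) / (‖rvec ℓ‖ : ℂ)) •
    ((Submodule.orthogonalProjectionOnto ((ℂ ∙ cvec (h + ℓ))ᗮ) b : (ℂ ∙ cvec (h + ℓ))ᗮ) :
      EuclideanSpace ℂ (Fin d))

/-- The set of admissible constants `Q` for the bilinear map `P_{hℓ}` restricted to
`h^⊥ × ℓ^⊥` (bilinear-dot-product orthogonality with the real vectors `h`, `ℓ`). -/
def bilinSet {d : ℕ} (h ℓ : Fin d → ℤ) : Set ℝ :=
  {Q : ℝ | 0 ≤ Q ∧ ∀ a b : EuclideanSpace ℂ (Fin d),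
    (∑ i, (h i : ℂ) * a i) = 0 → (∑ i, (ℓ i : ℂ) * b i) = 0 →
      ‖Phl h ℓ a b‖ ≤ Q * ‖a‖ * ‖b‖}

section Helpers
variable {d : ℕ}

@[simp] lemma rvec_apply (h : Fin d → ℤ) (i : Fin d) : rvec h i = (h i : ℝ) := rfl
@[simp] lemma cvec_apply (h : Fin d → ℤ) (i : Fin d) : cvec h i = (h i : ℂ) := rfl

def cof (w : EuclideanSpace ℝ (Fin d)) : EuclideanSpace ℂ (Fin d) :=
  (WithLp.equiv 2 (Fin d → ℂ)).symm (fun i => (w i : ℂ))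

@[simp] lemma cof_apply (w : EuclideanSpace ℝ (Fin d)) (i : Fin d) : cof w i = (w i : ℂ) := rfl

lemma norm_cof (w : EuclideanSpace ℝ (Fin d)) : ‖cof w‖ = ‖w‖ := by
  rw [EuclideanSpace.norm_eq, EuclideanSpace.norm_eq]; simp

lemma rvec_ne_zero {h : Fin d → ℤ} (hh : h ≠ 0) : rvec h ≠ 0 := by
  intro h0
  apply hh
  funext i
  have h1 : rvec h i = (0 : EuclideanSpace ℝ (Fin d)) i := congrArg (fun x : EuclideanSpace ℝ (Fin d) => x i) h0
  simp only [rvec_apply] at h1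
  have h2 : (0 : EuclideanSpace ℝ (Fin d)) i = 0 := rfl
  rw [h2] at h1
  show h i = 0
  exact_mod_cast h1

lemma real_sum_inner (x y : EuclideanSpace ℝ (Fin d)) :
    (inner ℝ x y : ℝ) = ∑ i, x i * y i := by
  rw [PiLp.inner_apply]; simp [RCLike.inner_apply, mul_comm]

lemma sum_int_cast (v : Fin d → ℤ) (x : EuclideanSpace ℝ (Fin d)) :
    ∑ i, (v i : ℂ) * ((x i : ℝ) : ℂ) = ((inner ℝ (rvec v) x : ℝ) : ℂ) := by
  rw [real_sum_inner]; push_cast; rfl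

lemma cs_mixed (a : EuclideanSpace ℂ (Fin d)) (w : EuclideanSpace ℝ (Fin d)) :
    ‖∑ i, a i * (w i : ℂ)‖ ≤ ‖a‖ * ‖w‖ := by
  set astar : EuclideanSpace ℂ (Fin d) :=
    (WithLp.equiv 2 (Fin d → ℂ)).symm (fun i => (starRingEnd ℂ) (a i)) with hastar
  have h1 : (inner ℂ astar (cof w) : ℂ) = ∑ i, a i * (w i : ℂ) := by
    rw [PiLp.inner_apply]
    simp [hastar, mul_comm]
  have h2 : ‖astar‖ = ‖a‖ := by
    rw [EuclideanSpace.norm_eq, EuclideanSpace.norm_eq]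
    simp [hastar]
  calc ‖∑ i, a i * (w i : ℂ)‖ = ‖(inner ℂ astar (cof w) : ℂ)‖ := by rw [h1]
    _ ≤ ‖astar‖ * ‖cof w‖ := norm_inner_le_norm _ _
    _ = ‖a‖ * ‖w‖ := by rw [h2, norm_cof]

open InnerProductGeometry in
lemma norm_perp_component {V : Type*} [NormedAddCommGroup V] [InnerProductSpace ℝ V]
    (H L : V) (hH : H ≠ 0) :
    ‖L - ((inner ℝ H L : ℝ) / ‖H‖ ^ 2) • H‖ = ‖L‖ * Real.sin (angle H L) := by
  set s := Real.sin (angle H L) with hs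
  set P : ℝ := inner ℝ H L with hP
  have hH0 : (0:ℝ) < ‖H‖ := norm_pos_iff.mpr hH
  have hs0 : 0 ≤ s := Real.sin_nonneg_of_nonneg_of_le_pi (angle_nonneg _ _) (angle_le_pi _ _)
  have hkey : s * (‖H‖ * ‖L‖) = Real.sqrt (‖H‖^2 * ‖L‖^2 - P * P) := by
    have := sin_angle_mul_norm_mul_norm H L
    rwa [real_inner_self_eq_norm_sq, real_inner_self_eq_norm_sq] at this
  have hnn : 0 ≤ ‖H‖^2 * ‖L‖^2 - P * P := by
    have := real_inner_mul_inner_self_le H L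
    rw [real_inner_self_eq_norm_sq, real_inner_self_eq_norm_sq] at this
    linarith
  have hs2 : s^2 * (‖H‖^2 * ‖L‖^2) = ‖H‖^2 * ‖L‖^2 - P * P := by
    have := congrArg (· ^ 2) hkey
    simpa [mul_pow, Real.sq_sqrt hnn] using this
  have hsq : ‖L - (P / ‖H‖ ^ 2) • H‖ ^ 2 = (‖L‖ * s) ^ 2 := by
    have hLH : (inner ℝ L H : ℝ) = P := by rw [hP, real_inner_comm]
    rw [norm_sub_sq_real, real_inner_smul_right, norm_smul, hLH, mul_pow, Real.norm_eq_abs,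
      sq_abs]
    have hH2 : (‖H‖:ℝ)^2 ≠ 0 := by positivity
    field_simp
    nlinarith [hs2]
  have h1 : ‖L - (P / ‖H‖ ^ 2) • H‖ = Real.sqrt ((‖L‖ * s)^2) := by
    rw [← hsq, Real.sqrt_sq (norm_nonneg _)]
  rw [h1, Real.sqrt_sq (by positivity)]

end Helpers

/-- For `d ≥ 3` and nonzero `h, ℓ ∈ ℤ^d`, the norm of the bilinear map
`P_{hℓ} : h^⊥ × ℓ^⊥ → (h+ℓ)^⊥` (the least constant `Q ≥ 0` with
`|P_{hℓ}(a,b)| ≤ Q|a||b|`) equals `sin θ_{hℓ}`. -/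
theorem Phl_norm_eq_sin (d : ℕ) (hd : 3 ≤ d) (h ℓ : Fin d → ℤ) (hh : h ≠ 0) (hℓ : ℓ ≠ 0) :
    IsLeast (bilinSet h ℓ) (Real.sin (InnerProductGeometry.angle (rvec h) (rvec ℓ))) := by
  classical
  set Hv := rvec h with hHv
  set Lv := rvec ℓ with hLv
  set s := Real.sin (InnerProductGeometry.angle Hv Lv) with hsdef
  have hHne : Hv ≠ 0 := rvec_ne_zero hh
  have hLne : Lv ≠ 0 := rvec_ne_zero hℓ
  have hHpos : (0:ℝ) < ‖Hv‖ := norm_pos_iff.mpr hHne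
  have hLpos : (0:ℝ) < ‖Lv‖ := norm_pos_iff.mpr hLne
  have hs0 : 0 ≤ s := Real.sin_nonneg_of_nonneg_of_le_pi
    (InnerProductGeometry.angle_nonneg _ _) (InnerProductGeometry.angle_le_pi _ _)
  set c : ℝ := (inner ℝ Hv Lv : ℝ) / ‖Hv‖ ^ 2 with hc
  set v : EuclideanSpace ℝ (Fin d) := Lv - c • Hv with hv
  have hvnorm : ‖v‖ = ‖Lv‖ * s := norm_perp_component Hv Lv hHne
  have hvperp : (inner ℝ Hv v : ℝ) = 0 := by
    rw [hv, inner_sub_right, real_inner_smul_right, hc, real_inner_self_eq_norm_sq]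
    field_simp
    ring
  -- generic norm formula for Phl
  have hPhlnorm : ∀ a b : EuclideanSpace ℂ (Fin d),
      ‖Phl h ℓ a b‖ = ‖∑ i, a i * (ℓ i : ℂ)‖ / ‖Lv‖ *
        ‖((Submodule.orthogonalProjectionOnto ((ℂ ∙ cvec (h + ℓ))ᗮ) b : (ℂ ∙ cvec (h + ℓ))ᗮ) :
          EuclideanSpace ℂ (Fin d))‖ := by
    intro a b
    rw [Phl, norm_smul, norm_div, Complex.norm_real, Real.norm_eq_abs, abs_norm, ← hLv]
  constructor
  · refine ⟨hs0, ?_⟩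
    intro a b ha hb
    have hsum : ∑ i, a i * (ℓ i : ℂ) = ∑ i, a i * ((v i : ℝ) : ℂ) := by
      have hvi : ∀ i, ((v i : ℝ) : ℂ) = (ℓ i : ℂ) - (c : ℂ) * (h i : ℂ) := by
        intro i
        have : v i = (ℓ i : ℝ) - c * (h i : ℝ) := by
          simp [hv, hLv, hHv, PiLp.sub_apply, PiLp.smul_apply]
        rw [this]; push_cast; ring
      have hah : ∑ i, a i * (h i : ℂ) = 0 := by
        rw [← ha]; exact Finset.sum_congr rfl (fun i _ => mul_comm _ _)
      calc ∑ i, a i * (ℓ i : ℂ)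
          = ∑ i, (a i * ((v i : ℝ) : ℂ) + (c : ℂ) * (a i * (h i : ℂ))) := by
            refine Finset.sum_congr rfl (fun i _ => ?_); rw [hvi i]; ring
        _ = ∑ i, a i * ((v i : ℝ) : ℂ) + (c : ℂ) * ∑ i, a i * (h i : ℂ) := by
            rw [Finset.sum_add_distrib, Finset.mul_sum]
        _ = ∑ i, a i * ((v i : ℝ) : ℂ) := by rw [hah, mul_zero, add_zero]
    have hS : ‖∑ i, a i * (ℓ i : ℂ)‖ ≤ ‖a‖ * (‖Lv‖ * s) := by
      rw [hsum, ← hvnorm]; exact cs_mixed a v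
    have hproj : ‖((Submodule.orthogonalProjectionOnto ((ℂ ∙ cvec (h + ℓ))ᗮ) b : (ℂ ∙ cvec (h + ℓ))ᗮ) :
        EuclideanSpace ℂ (Fin d))‖ ≤ ‖b‖ := by
      have h1 := (Submodule.orthogonalProjectionOnto ((ℂ ∙ cvec (h + ℓ))ᗮ)).le_opNorm b
      have h2 := Submodule.orthogonalProjectionOnto_norm_le ((ℂ ∙ cvec (h + ℓ))ᗮ)
      have h3 : ‖((Submodule.orthogonalProjectionOnto ((ℂ ∙ cvec (h + ℓ))ᗮ) b : (ℂ ∙ cvec (h + ℓ))ᗮ) :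
          EuclideanSpace ℂ (Fin d))‖ = ‖Submodule.orthogonalProjectionOnto ((ℂ ∙ cvec (h + ℓ))ᗮ) b‖ := rfl
      rw [h3]
      calc ‖Submodule.orthogonalProjectionOnto ((ℂ ∙ cvec (h + ℓ))ᗮ) b‖
          ≤ ‖(Submodule.orthogonalProjectionOnto ((ℂ ∙ cvec (h + ℓ))ᗮ) : _ →L[ℂ] _)‖ * ‖b‖ := h1
        _ ≤ 1 * ‖b‖ := by
            apply mul_le_mul_of_nonneg_right h2 (norm_nonneg _)
        _ = ‖b‖ := one_mul _
    rw [hPhlnorm a b]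
    calc ‖∑ i, a i * (ℓ i : ℂ)‖ / ‖Lv‖ *
        ‖((Submodule.orthogonalProjectionOnto ((ℂ ∙ cvec (h + ℓ))ᗮ) b : (ℂ ∙ cvec (h + ℓ))ᗮ) :
          EuclideanSpace ℂ (Fin d))‖
        ≤ (‖a‖ * (‖Lv‖ * s)) / ‖Lv‖ * ‖b‖ := by
          gcongr
      _ = s * ‖a‖ * ‖b‖ := by field_simp
  · -- lower bound
    rintro Q ⟨hQ0, hQle⟩
    -- find w orthogonal to Hv and Lv
    have hspan_ne : (Submodule.span ℝ ({Hv, Lv} : Set (EuclideanSpace ℝ (Fin d))))ᗮ ≠ ⊥ := by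
      intro hbot
      have htop := Submodule.orthogonal_eq_bot_iff.mp hbot
      have h2 : Module.finrank ℝ (Submodule.span ℝ ({Hv, Lv} : Set (EuclideanSpace ℝ (Fin d)))) ≤ 2 := by
        have hcoe : (({Hv, Lv} : Finset (EuclideanSpace ℝ (Fin d))) : Set (EuclideanSpace ℝ (Fin d)))
            = ({Hv, Lv} : Set (EuclideanSpace ℝ (Fin d))) := by simp
        have := finrank_span_finset_le_card (R := ℝ) ({Hv, Lv} : Finset (EuclideanSpace ℝ (Fin d)))
        rw [Set.finrank, hcoe] at this
        exact le_trans this (le_trans (Finset.card_insert_le _ _) (by simp))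
      rw [htop] at h2
      have h3 : Module.finrank ℝ (⊤ : Submodule ℝ (EuclideanSpace ℝ (Fin d))) = d := by
        rw [finrank_top, finrank_euclideanSpace, Fintype.card_fin]
      omega
    obtain ⟨w, hwmem, hwne⟩ := (Submodule.ne_bot_iff _).mp hspan_ne
    have hwH : (inner ℝ Hv w : ℝ) = 0 :=
      hwmem Hv (Submodule.subset_span (Set.mem_insert _ _))
    have hwL : (inner ℝ Lv w : ℝ) = 0 :=
      hwmem Lv (Submodule.subset_span (Set.mem_insert_of_mem _ rfl))
    have hwpos : (0:ℝ) < ‖w‖ := norm_pos_iff.mpr hwne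
    set A : EuclideanSpace ℂ (Fin d) := cof v with hA
    set B : EuclideanSpace ℂ (Fin d) := cof w with hB
    -- hypotheses for hQle
    have haA : ∑ i, (h i : ℂ) * A i = 0 := by
      have e := sum_int_cast h v
      rw [← hHv, hvperp] at e
      exact e.trans Complex.ofReal_zero
    have hbB : ∑ i, (ℓ i : ℂ) * B i = 0 := by
      have e := sum_int_cast ℓ w
      rw [← hLv, hwL] at e
      exact e.trans Complex.ofReal_zero
    -- B is in the orthogonal complement
    have hBmem : B ∈ (ℂ ∙ cvec (h + ℓ))ᗮ := by
      rw [Submodule.mem_orthogonal_singleton_iff_inner_right]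
      have hrv : ∀ i, cvec (h + ℓ) i = ((Hv i + Lv i : ℝ) : ℂ) := by
        intro i
        simp only [hHv, hLv, cvec_apply, rvec_apply, Pi.add_apply]
        push_cast
        try rfl
      rw [PiLp.inner_apply]
      simp only [RCLike.inner_apply]
      have : ∀ i, B i * (starRingEnd ℂ) (cvec (h + ℓ) i)
          = ((Hv i + Lv i) * w i : ℝ) := by
        intro i
        rw [hrv i, Complex.conj_ofReal, mul_comm]
        push_cast
        rfl
      rw [Finset.sum_congr rfl (fun i _ => this i)]
      rw [← Complex.ofReal_sum]
      norm_cast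
      have : ∑ i, (Hv i + Lv i) * w i = (inner ℝ Hv w : ℝ) + (inner ℝ Lv w : ℝ) := by
        rw [real_sum_inner, real_sum_inner, ← Finset.sum_add_distrib]
        exact Finset.sum_congr rfl (fun i _ => by ring)
      rw [this, hwH, hwL, add_zero]
    have hprojB : ((Submodule.orthogonalProjectionOnto ((ℂ ∙ cvec (h + ℓ))ᗮ) B : (ℂ ∙ cvec (h + ℓ))ᗮ) :
        EuclideanSpace ℂ (Fin d)) = B := Submodule.starProjection_eq_self_iff.mpr hBmem
    -- the value of the sum ∑ A i * ℓ i
    have hSval : ∑ i, A i * (ℓ i : ℂ) = ((‖v‖^2 : ℝ) : ℂ) := by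
      have h1 : ∑ i, A i * (ℓ i : ℂ) = ((inner ℝ Lv v : ℝ) : ℂ) := by
        have e := sum_int_cast ℓ v
        rw [← hLv] at e
        rw [← e]
        exact Finset.sum_congr rfl (fun i _ => mul_comm _ _)
      have h2 : (inner ℝ Lv v : ℝ) = ‖v‖^2 := by
        have hLsplit : Lv = v + c • Hv := by rw [hv]; abel
        nth_rewrite 1 [hLsplit]
        rw [inner_add_left, real_inner_smul_left, hvperp, mul_zero, add_zero,
          real_inner_self_eq_norm_sq]
      rw [h1, h2]
    have hQ := hQle A B haA hbB
    rw [hPhlnorm A B, hprojB, hSval] at hQ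
    have hnormA : ‖A‖ = ‖Lv‖ * s := by rw [hA, norm_cof, hvnorm]
    have hnormB : ‖B‖ = ‖w‖ := by rw [hB, norm_cof]
    rw [hnormA, hnormB] at hQ
    have hnormS : ‖((‖v‖^2 : ℝ) : ℂ)‖ = (‖Lv‖ * s)^2 := by
      rw [Complex.norm_real, Real.norm_eq_abs, abs_of_nonneg (by positivity), hvnorm]
    rw [hnormS] at hQ
    -- hQ : (‖Lv‖ * s)^2 / ‖Lv‖ * ‖w‖ ≤ Q * (‖Lv‖ * s) * ‖w‖
    by_cases hs : s = 0
    · rw [hs]; exact hQ0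
    · have hspos : 0 < s := lt_of_le_of_ne hs0 (Ne.symm hs)
      have hineq : ‖Lv‖ * s^2 * ‖w‖ ≤ Q * (‖Lv‖ * s) * ‖w‖ := by
        have : (‖Lv‖ * s)^2 / ‖Lv‖ = ‖Lv‖ * s^2 := by field_simp
        rwa [this] at hQ
      nlinarith [mul_pos (mul_pos hLpos hspos) hwpos, mul_pos hLpos hspos]
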